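/- Let p ≥ 1, let n_1, …, n_p be positive integers, and let α_1, …, α_p be positive reals with α_1 + ⋯ + α_p = 1. Let A = Π_{i=1}^p M_{n_i}(ℂ) (the direct product of complex matrix algebras, with entrywise operations and conjugate-transpose as star operation), and define φ : A → ℂ by φ(x) = Σ_{i=1}^p α_i · Tr(x_i)/n_i. Then for every ε with 0 < ε < 1 there exists N ∈ ℕ such that for every integer k ≥ N there exists an injective (not necessarily unital) star-algebra homomorphism σ : A → M_k(ℂ) such that: (i) |Tr(σ(x))/k − φ(x)| ≤ ε · max_{1 ≤ i ≤ p} ‖x_i‖ for all x ∈ A, where ‖·‖ is the operator norm; and (ii) the commutant {y ∈ M_k(ℂ) : y·σ(x) = σ(x)·y for all x ∈ A} has complex dimension at most k² · Σ_{i=1}^p α_i² / n_i². -/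

import Mathlib

open scoped Matrix.Norms.L2Operator
open Matrix

section Build
variable (p : ℕ) (n m : Fin p → ℕ) (r : ℕ)

abbrev IdxT := (Σ i : Fin p, Fin (n i) × Fin (m i)) ⊕ Fin r

noncomputable def Dmat (x : ∀ i : Fin p, Matrix (Fin (n i)) (Fin (n i)) ℂ) :
    Matrix (IdxT p n m r) (IdxT p n m r) ℂ :=
  Matrix.fromBlocks
    (Matrix.blockDiagonal' (fun i => Matrix.blockDiagonal (fun _ : Fin (m i) => x i))) 0 0 0

theorem Dmat_mul (x y : ∀ i : Fin p, Matrix (Fin (n i)) (Fin (n i)) ℂ) :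
    Dmat p n m r (x * y) = Dmat p n m r x * Dmat p n m r y := by
  simp [Dmat, Matrix.fromBlocks_multiply, ← Matrix.blockDiagonal'_mul, ← Matrix.blockDiagonal_mul]

theorem Dmat_add (x y : ∀ i : Fin p, Matrix (Fin (n i)) (Fin (n i)) ℂ) :
    Dmat p n m r (x + y) = Dmat p n m r x + Dmat p n m r y := by
  unfold Dmat
  have h1 : (fun i => Matrix.blockDiagonal fun _ : Fin (m i) => (x + y) i)
      = (fun i => Matrix.blockDiagonal fun _ : Fin (m i) => x i)
        + fun i => Matrix.blockDiagonal fun _ : Fin (m i) => y i :=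
    funext fun i => Matrix.blockDiagonal_add _ _
  rw [h1, Matrix.blockDiagonal'_add]
  ext (u | u) (v | v) <;> simp [Matrix.fromBlocks]

theorem Dmat_smul (c : ℂ) (x : ∀ i : Fin p, Matrix (Fin (n i)) (Fin (n i)) ℂ) :
    Dmat p n m r (c • x) = c • Dmat p n m r x := by
  unfold Dmat
  have h1 : (fun i => Matrix.blockDiagonal fun _ : Fin (m i) => (c • x) i)
      = c • fun i => Matrix.blockDiagonal fun _ : Fin (m i) => x i :=
    funext fun i => Matrix.blockDiagonal_smul _ _
  rw [h1, Matrix.blockDiagonal'_smul]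
  ext (u | u) (v | v) <;> simp [Matrix.fromBlocks]

theorem Dmat_star (x : ∀ i : Fin p, Matrix (Fin (n i)) (Fin (n i)) ℂ) :
    Dmat p n m r (star x) = star (Dmat p n m r x) := by
  unfold Dmat
  have h1 : (fun i => Matrix.blockDiagonal fun _ : Fin (m i) => (star x) i)
      = fun i => (Matrix.blockDiagonal fun _ : Fin (m i) => x i)ᴴ := by
    funext i
    rw [Matrix.blockDiagonal_conjTranspose]
    rfl
  rw [Matrix.star_eq_conjTranspose, Matrix.fromBlocks_conjTranspose, h1,
    ← Matrix.blockDiagonal'_conjTranspose]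
  ext (u | u) (v | v) <;> simp [Matrix.fromBlocks]

theorem Dmat_zero : Dmat p n m r 0 = 0 := by
  unfold Dmat
  ext (⟨i,s,a⟩ | u) (v | v) <;> simp [Matrix.fromBlocks, Matrix.blockDiagonal'_apply, Matrix.blockDiagonal_apply, apply_dite]
end Build

section Entries
variable {p : ℕ} {n m : Fin p → ℕ} {r : ℕ}

lemma Dmat_apply_inl_inr (x : ∀ i : Fin p, Matrix (Fin (n i)) (Fin (n i)) ℂ)
    (u : Σ i : Fin p, Fin (n i) × Fin (m i)) (v : Fin r) :
    Dmat p n m r x (Sum.inl u) (Sum.inr v) = 0 := rfl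

lemma Dmat_apply_inr (x : ∀ i : Fin p, Matrix (Fin (n i)) (Fin (n i)) ℂ)
    (u : Fin r) (v : IdxT p n m r) :
    Dmat p n m r x (Sum.inr u) v = 0 := by
  rcases v with v | v <;> rfl

lemma Dmat_apply_inl_inl (x : ∀ i : Fin p, Matrix (Fin (n i)) (Fin (n i)) ℂ)
    (i : Fin p) (s t : Fin (n i)) (a b : Fin (m i)) :
    Dmat p n m r x (Sum.inl ⟨i, (s, a)⟩) (Sum.inl ⟨i, (t, b)⟩)
      = if a = b then x i s t else 0 := by
  have : Dmat p n m r x (Sum.inl ⟨i, (s, a)⟩) (Sum.inl ⟨i, (t, b)⟩)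
      = Matrix.blockDiagonal' (fun i => Matrix.blockDiagonal (fun _ : Fin (m i) => x i))
        ⟨i, (s, a)⟩ ⟨i, (t, b)⟩ := rfl
  rw [this, Matrix.blockDiagonal'_apply_eq, Matrix.blockDiagonal_apply]

lemma Dmat_apply_inl_inl_ne (x : ∀ i : Fin p, Matrix (Fin (n i)) (Fin (n i)) ℂ)
    {i j : Fin p} (h : i ≠ j) (q : Fin (n i) × Fin (m i)) (q' : Fin (n j) × Fin (m j)) :
    Dmat p n m r x (Sum.inl ⟨i, q⟩) (Sum.inl ⟨j, q'⟩) = 0 := by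
  have : Dmat p n m r x (Sum.inl ⟨i, q⟩) (Sum.inl ⟨j, q'⟩)
      = Matrix.blockDiagonal' (fun i => Matrix.blockDiagonal (fun _ : Fin (m i) => x i))
        ⟨i, q⟩ ⟨j, q'⟩ := rfl
  rw [this, Matrix.blockDiagonal'_apply_ne _ _ _ h]

lemma mul_Dmat_single_apply (w : Matrix (IdxT p n m r) (IdxT p n m r) ℂ)
    (i : Fin p) (E : Matrix (Fin (n i)) (Fin (n i)) ℂ) (u : IdxT p n m r)
    (t'' : Fin (n i)) (b : Fin (m i)) :
    (w * Dmat p n m r (Pi.single i E)) u (Sum.inl ⟨i, (t'', b)⟩)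
      = ∑ s'', w u (Sum.inl ⟨i, (s'', b)⟩) * E s'' t'' := by
  rw [Matrix.mul_apply, Fintype.sum_sum_type]
  simp only [Dmat_apply_inr, mul_zero, Finset.sum_const_zero, add_zero]
  rw [← Finset.univ_sigma_univ, Finset.sum_sigma]
  rw [Finset.sum_eq_single i]
  · simp [Dmat_apply_inl_inl, Fintype.sum_prod_type, mul_ite, mul_zero,
      Finset.sum_ite_eq', Pi.single_eq_same]
  · intro j _ hj
    simp [Dmat_apply_inl_inl_ne _ hj]
  · simp
end Entries

section Entries2
variable {p : ℕ} {n m : Fin p → ℕ} {r : ℕ}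

lemma Dmat_single_mul_apply (w : Matrix (IdxT p n m r) (IdxT p n m r) ℂ)
    (i : Fin p) (E : Matrix (Fin (n i)) (Fin (n i)) ℂ) (v : IdxT p n m r)
    (s' : Fin (n i)) (a : Fin (m i)) :
    (Dmat p n m r (Pi.single i E) * w) (Sum.inl ⟨i, (s', a)⟩) v
      = ∑ t'', E s' t'' * w (Sum.inl ⟨i, (t'', a)⟩) v := by
  rw [Matrix.mul_apply, Fintype.sum_sum_type]
  simp only [Dmat_apply_inl_inr, zero_mul, Finset.sum_const_zero, add_zero]
  rw [← Finset.univ_sigma_univ, Finset.sum_sigma]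
  rw [Finset.sum_eq_single i]
  · simp [Dmat_apply_inl_inl, Fintype.sum_prod_type, ite_mul, zero_mul,
      Finset.sum_ite_eq, Pi.single_eq_same]
  · intro j _ hj
    simp [Dmat_apply_inl_inl_ne _ hj.symm]
  · simp
end Entries2

section Comm
variable {p : ℕ} {n m : Fin p → ℕ} {r : ℕ}
variable (w : Matrix (IdxT p n m r) (IdxT p n m r) ℂ)

lemma Dmat_single_mul_apply_ne {i j : Fin p} (hij : j ≠ i)
    (E : Matrix (Fin (n i)) (Fin (n i)) ℂ) (q : Fin (n j) × Fin (m j)) (v : IdxT p n m r) :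
    (Dmat p n m r (Pi.single i E) * w) (Sum.inl ⟨j, q⟩) v = 0 := by
  rw [Matrix.mul_apply, Fintype.sum_sum_type]
  simp only [Dmat_apply_inl_inr, zero_mul, Finset.sum_const_zero, add_zero]
  rw [← Finset.univ_sigma_univ, Finset.sum_sigma]
  refine Finset.sum_eq_zero fun i' _ => Finset.sum_eq_zero fun q' _ => ?_
  rcases eq_or_ne j i' with h | h
  · subst h
    obtain ⟨s, a⟩ := q
    obtain ⟨t, b⟩ := q'
    rw [Dmat_apply_inl_inl, Pi.single_eq_of_ne hij]
    simp
  · rw [Dmat_apply_inl_inl_ne _ h, zero_mul]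

variable (hw : ∀ x, w * Dmat p n m r x = Dmat p n m r x * w)
include hw

lemma comm_offblock {i j : Fin p} (hij : i ≠ j) (q : Fin (n i) × Fin (m i))
    (t : Fin (n j)) (b : Fin (m j)) :
    w (Sum.inl ⟨i, q⟩) (Sum.inl ⟨j, (t, b)⟩) = 0 := by
  have h := congrFun (congrFun (hw (Pi.single j (Matrix.single t t 1)))
    (Sum.inl ⟨i, q⟩)) (Sum.inl ⟨j, (t, b)⟩)
  rw [mul_Dmat_single_apply, Dmat_single_mul_apply_ne w hij] at h
  simpa [Matrix.single, Finset.sum_ite_eq] using h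

lemma comm_offdiag {i : Fin p} {s t : Fin (n i)} (hst : s ≠ t) (a b : Fin (m i)) :
    w (Sum.inl ⟨i, (s, a)⟩) (Sum.inl ⟨i, (t, b)⟩) = 0 := by
  have h := congrFun (congrFun (hw (Pi.single i (Matrix.single t t 1)))
    (Sum.inl ⟨i, (s, a)⟩)) (Sum.inl ⟨i, (t, b)⟩)
  rw [mul_Dmat_single_apply, Dmat_single_mul_apply] at h
  simpa [Matrix.single, Finset.sum_ite_eq, hst, Ne.symm hst] using h

lemma comm_diag (i : Fin p) (s t : Fin (n i)) (a b : Fin (m i)) :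
    w (Sum.inl ⟨i, (s, a)⟩) (Sum.inl ⟨i, (s, b)⟩)
      = w (Sum.inl ⟨i, (t, a)⟩) (Sum.inl ⟨i, (t, b)⟩) := by
  have h := congrFun (congrFun (hw (Pi.single i (Matrix.single s t 1)))
    (Sum.inl ⟨i, (s, a)⟩)) (Sum.inl ⟨i, (t, b)⟩)
  rw [mul_Dmat_single_apply, Dmat_single_mul_apply] at h
  simpa [Matrix.single, Finset.sum_ite_eq] using h

lemma comm_inl_inr (u : Σ i : Fin p, Fin (n i) × Fin (m i)) (v : Fin r) :
    w (Sum.inl u) (Sum.inr v) = 0 := by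
  obtain ⟨i, s, a⟩ := u
  have h := congrFun (congrFun (hw (Pi.single i (Matrix.single s s 1)))
    (Sum.inl ⟨i, (s, a)⟩)) (Sum.inr v)
  rw [Dmat_single_mul_apply, Matrix.mul_apply] at h
  have hz : ∀ c : IdxT p n m r,
      Dmat p n m r (Pi.single i (Matrix.single s s 1)) c (Sum.inr v) = 0 := by
    rintro (c | c)
    · exact Dmat_apply_inl_inr _ _ _
    · exact Dmat_apply_inr _ _ _
  simp only [hz, mul_zero, Finset.sum_const_zero] at h
  symm at h
  simpa [Matrix.single, Finset.sum_ite_eq] using h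

lemma comm_inr_inl (u : Fin r) (v : Σ j : Fin p, Fin (n j) × Fin (m j)) :
    w (Sum.inr u) (Sum.inl v) = 0 := by
  obtain ⟨j, t, b⟩ := v
  have h := congrFun (congrFun (hw (Pi.single j (Matrix.single t t 1)))
    (Sum.inr u)) (Sum.inl ⟨j, (t, b)⟩)
  rw [mul_Dmat_single_apply, Matrix.mul_apply] at h
  simp only [Dmat_apply_inr, zero_mul, Finset.sum_const_zero] at h
  simpa [Matrix.single, Finset.sum_ite_eq] using h
end Comm

theorem master (p : ℕ) (n m : Fin p → ℕ) (hn : ∀ i, 0 < n i) (hm : ∀ i, 0 < m i) (r k : ℕ)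
    (hk : (∑ i, n i * m i) + r = k) :
    ∃ σ : (∀ i : Fin p, Matrix (Fin (n i)) (Fin (n i)) ℂ) →⋆ₙₐ[ℂ]
            Matrix (Fin k) (Fin k) ℂ,
      Function.Injective σ ∧
      (∀ x, Matrix.trace (σ x) = ∑ i, (m i : ℂ) * Matrix.trace (x i)) ∧
      Module.finrank ℂ
          (Subalgebra.centralizer ℂ (Set.range ⇑σ) :
            Subalgebra ℂ (Matrix (Fin k) (Fin k) ℂ))
        ≤ (∑ i, (m i) ^ 2) + r ^ 2 := by
  classical
  have hcard : Fintype.card (IdxT p n m r) = k := by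
    simp [Fintype.card_sigma, mul_comm]
    omega
  let e : IdxT p n m r ≃ Fin k := Fintype.equivFinOfCardEq hcard
  let σ : (∀ i : Fin p, Matrix (Fin (n i)) (Fin (n i)) ℂ) →⋆ₙₐ[ℂ]
      Matrix (Fin k) (Fin k) ℂ :=
    { toFun := fun x => (Dmat p n m r x).submatrix e.symm e.symm
      map_smul' := fun c x => by
        show (Dmat p n m r (c • x)).submatrix _ _ = c • (Dmat p n m r x).submatrix _ _
        rw [Dmat_smul]; ext u v; simp
      map_zero' := by
        show (Dmat p n m r 0).submatrix _ _ = 0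
        rw [Dmat_zero]; ext u v; simp
      map_add' := fun x y => by
        show (Dmat p n m r (x + y)).submatrix _ _
          = (Dmat p n m r x).submatrix _ _ + (Dmat p n m r y).submatrix _ _
        rw [Dmat_add]; ext u v; simp
      map_mul' := fun x y => by
        show (Dmat p n m r (x * y)).submatrix _ _
          = (Dmat p n m r x).submatrix _ _ * (Dmat p n m r y).submatrix _ _
        rw [Dmat_mul, ← Matrix.submatrix_mul_equiv _ _ _ e.symm _]
      map_star' := fun x => by
        show (Dmat p n m r (star x)).submatrix _ _ = star ((Dmat p n m r x).submatrix _ _)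
        rw [Dmat_star, Matrix.star_eq_conjTranspose, Matrix.star_eq_conjTranspose,
          Matrix.conjTranspose_submatrix] }
  have hσ : ∀ x, σ x = (Dmat p n m r x).submatrix e.symm e.symm := fun _ => rfl
  refine ⟨σ, ?_, ?_, ?_⟩
  · -- injectivity
    intro x y hxy
    funext i s t
    have hxy' : (Dmat p n m r x).submatrix e.symm e.symm
        = (Dmat p n m r y).submatrix e.symm e.symm := hxy
    have h2 := congrFun (congrFun hxy' (e (Sum.inl ⟨i, (s, ⟨0, hm i⟩)⟩)))
      (e (Sum.inl ⟨i, (t, ⟨0, hm i⟩)⟩))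
    simp only [Matrix.submatrix_apply, Equiv.symm_apply_apply, Dmat_apply_inl_inl,
      if_pos rfl] at h2
    exact h2
  · -- trace
    intro x
    rw [hσ]
    have htr : Matrix.trace ((Dmat p n m r x).submatrix e.symm e.symm)
        = Matrix.trace (Dmat p n m r x) := by
      simp only [Matrix.trace, Matrix.diag, Matrix.submatrix_apply]
      exact Fintype.sum_equiv e.symm _ _ (fun u => rfl)
    rw [htr]
    simp only [Matrix.trace, Matrix.diag, Fintype.sum_sum_type, Dmat_apply_inr,
      Finset.sum_const_zero, add_zero]
    rw [← Finset.univ_sigma_univ, Finset.sum_sigma]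
    refine Finset.sum_congr rfl fun i _ => ?_
    rw [Fintype.sum_prod_type]
    simp only [Dmat_apply_inl_inl, if_pos rfl, ite_true, Finset.sum_const, nsmul_eq_mul,
      Finset.card_univ, Fintype.card_fin]
    rw [← Finset.mul_sum]
  · -- finrank
    have hcomm : ∀ y : Matrix (Fin k) (Fin k) ℂ,
        y ∈ Subalgebra.centralizer ℂ (Set.range ⇑σ) →
        ∀ x, (y.submatrix e e) * Dmat p n m r x = Dmat p n m r x * (y.submatrix e e) := by
      intro y hy x
      have h := (Subalgebra.mem_centralizer_iff ℂ).mp hy (σ x) ⟨x, rfl⟩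
      have hy' : y = (y.submatrix e e).submatrix e.symm e.symm := by
        ext a b; simp
      rw [hy', hσ, Matrix.submatrix_mul_equiv, Matrix.submatrix_mul_equiv] at h
      ext u v
      have h2 := congrFun (congrFun h (e u)) (e v)
      simpa using h2.symm
    let V := ((∀ i : Fin p, Matrix (Fin (m i)) (Fin (m i)) ℂ) × Matrix (Fin r) (Fin r) ℂ)
    let F : (Subalgebra.centralizer ℂ (Set.range ⇑σ) :
        Subalgebra ℂ (Matrix (Fin k) (Fin k) ℂ)) →ₗ[ℂ] V :=
      { toFun := fun y =>
          (fun i => Matrix.of fun a b => (y : Matrix (Fin k) (Fin k) ℂ)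
              (e (Sum.inl ⟨i, (⟨0, hn i⟩, a)⟩)) (e (Sum.inl ⟨i, (⟨0, hn i⟩, b)⟩)),
            Matrix.of fun u v => (y : Matrix (Fin k) (Fin k) ℂ) (e (Sum.inr u)) (e (Sum.inr v)))
        map_add' := fun y z => rfl
        map_smul' := fun c y => rfl }
    have hF : Function.Injective F := by
      refine (injective_iff_map_eq_zero F).mpr ?_
      intro y hy0
      have hw := hcomm (y : Matrix (Fin k) (Fin k) ℂ) y.2
      have h1 : ∀ i (a b : Fin (m i)), (y : Matrix (Fin k) (Fin k) ℂ)
          (e (Sum.inl ⟨i, (⟨0, hn i⟩, a)⟩)) (e (Sum.inl ⟨i, (⟨0, hn i⟩, b)⟩)) = 0 := by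
        intro i a b
        have := congrFun (congrFun (congrFun (congrArg Prod.fst hy0) i) a) b
        exact this
      have h2 : ∀ u v : Fin r, (y : Matrix (Fin k) (Fin k) ℂ)
          (e (Sum.inr u)) (e (Sum.inr v)) = 0 := by
        intro u v
        exact congrFun (congrFun (congrArg Prod.snd hy0) u) v
      have key : ∀ u v : IdxT p n m r,
          (y : Matrix (Fin k) (Fin k) ℂ) (e u) (e v) = 0 := by
        rintro (⟨i, s, a⟩ | u) (⟨j, t, b⟩ | v)
        · rcases eq_or_ne i j with rfl | hij
          · rcases eq_or_ne s t with rfl | hst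
            · have hd := comm_diag _ hw i s ⟨0, hn i⟩ a b
              exact hd.trans (h1 i a b)
            · exact comm_offdiag _ hw hst a b
          · exact comm_offblock _ hw hij (s, a) t b
        · exact comm_inl_inr _ hw _ _
        · exact comm_inr_inl _ hw _ _
        · exact h2 u v
      apply Subtype.ext
      show (y : Matrix (Fin k) (Fin k) ℂ) = 0
      ext a b
      have := key (e.symm a) (e.symm b)
      simpa using this
    have hle := LinearMap.finrank_le_finrank_of_injective hF
    refine hle.trans ?_
    have : Module.finrank ℂ V = (∑ i, (m i) ^ 2) + r ^ 2 := by
      simp [V, Module.finrank_prod, Module.finrank_pi_fintype, Module.finrank_matrix, sq]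
    rw [this]

lemma entry_le_l2norm {d : ℕ} (M : Matrix (Fin d) (Fin d) ℂ) (s t : Fin d) :
    ‖M s t‖ ≤ ‖M‖ := by
  have h := Matrix.l2_opNorm_mulVec M (EuclideanSpace.single t (1 : ℂ))
  rw [EuclideanSpace.norm_single, norm_one, mul_one] at h
  set v : EuclideanSpace ℂ (Fin d) :=
    (EuclideanSpace.equiv (Fin d) ℂ).symm (M *ᵥ (EuclideanSpace.single t (1 : ℂ))) with hv
  have hvs : v s = M s t := by
    simp [hv, Matrix.mulVec, dotProduct, EuclideanSpace.single_apply]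
  have h2 : ‖v s‖ ≤ ‖v‖ := by
    rw [EuclideanSpace.norm_eq]
    rw [show ‖v s‖ = Real.sqrt (‖v s‖ ^ 2) by
      rw [Real.sqrt_sq (norm_nonneg _)]]
    apply Real.sqrt_le_sqrt
    exact Finset.single_le_sum (f := fun i => ‖v i‖ ^ 2)
      (fun i _ => sq_nonneg _) (Finset.mem_univ s)
  rw [hvs] at h2
  exact h2.trans h

lemma trace_le_l2norm {d : ℕ} (M : Matrix (Fin d) (Fin d) ℂ) :
    ‖Matrix.trace M‖ ≤ d * ‖M‖ := by
  calc ‖Matrix.trace M‖ ≤ ∑ s, ‖M s s‖ := by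
        rw [Matrix.trace]; exact norm_sum_le _ _
    _ ≤ ∑ _s : Fin d, ‖M‖ := Finset.sum_le_sum fun s _ => entry_le_l2norm M s s
    _ = d * ‖M‖ := by simp [Finset.sum_const, nsmul_eq_mul]


set_option maxHeartbeats 1000000 in
/-- Lemma 5.3 of the paper, stated algebraically: for `A = ⊕_i M_{n_i}(ℂ)` with trace
`φ = ⊕_i α_i tr_{n_i}`, for every `0 < ε < 1` and all sufficiently large `k` there is an
injective star-algebra embedding `σ : A → M_k(ℂ)` whose normalized trace is `ε`-close to
`φ` (in norm) and whose commutant has dimension at most `k² · ∑ α_i²/n_i²`. -/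
theorem stmt3 (p : ℕ) (hp : 1 ≤ p) (n : Fin p → ℕ) (hn : ∀ i, 0 < n i)
    (α : Fin p → ℝ) (hα : ∀ i, 0 < α i) (hsum : ∑ i, α i = 1)
    (ε : ℝ) (hε : 0 < ε) (hε1 : ε < 1) :
    ∃ N : ℕ, ∀ k : ℕ, N ≤ k →
      ∃ σ : (∀ i : Fin p, Matrix (Fin (n i)) (Fin (n i)) ℂ) →⋆ₙₐ[ℂ]
              Matrix (Fin k) (Fin k) ℂ,
        Function.Injective σ ∧
        (∀ x : ∀ i : Fin p, Matrix (Fin (n i)) (Fin (n i)) ℂ,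
          ‖Matrix.trace (σ x) / (k : ℂ) -
              ∑ i, (α i : ℂ) * Matrix.trace (x i) / (n i : ℂ)‖ ≤
            ε * ⨆ i, ‖x i‖) ∧
        ((Module.finrank ℂ
            (Subalgebra.centralizer ℂ (Set.range ⇑σ) :
              Subalgebra ℂ (Matrix (Fin k) (Fin k) ℂ)) : ℝ) ≤
          (k : ℝ) ^ 2 * ∑ i, (α i) ^ 2 / (n i : ℝ) ^ 2) := by
  classical
  have hpn : Nonempty (Fin p) := ⟨⟨0, hp⟩⟩
  set S : ℝ := ∑ i, (n i : ℝ) with hS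
  set c : ℝ := ∑ i, α i / (n i : ℝ) with hc
  have hnR : ∀ i, (0 : ℝ) < n i := fun i => by exact_mod_cast hn i
  have hS0 : 0 < S := Finset.sum_pos (fun i _ => hnR i) Finset.univ_nonempty
  have hc0 : 0 < c := Finset.sum_pos (fun i _ => div_pos (hα i) (hnR i)) Finset.univ_nonempty
  set C : ℝ := (∑ i, 3 * (n i : ℝ) / α i) + (2 * S) / ε + (4 * S ^ 2 + p) / (2 * c) with hC
  refine ⟨⌈C⌉₊ + 1, fun k hk => ?_⟩
  have hkC : C ≤ (k : ℝ) := by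
    calc C ≤ (⌈C⌉₊ : ℝ) := Nat.le_ceil C
    _ ≤ (k : ℝ) := by exact_mod_cast le_trans (Nat.le_succ _) hk
  have hk1 : 1 ≤ k := le_trans (Nat.le_add_left 1 _) hk
  have hk0 : (0 : ℝ) < k := by exact_mod_cast hk1
  -- the three parts of C
  have hp1nn : (0 : ℝ) ≤ ∑ i, 3 * (n i : ℝ) / α i :=
    Finset.sum_nonneg fun i _ => div_nonneg (by nlinarith [hnR i]) (hα i).le
  have hp2nn : (0 : ℝ) ≤ (2 * S) / ε := by positivity
  have hp3nn : (0 : ℝ) ≤ (4 * S ^ 2 + p) / (2 * c) := by positivity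
  have t2 : 2 * S ≤ ε * k := by
    have h2 : (2 * S) / ε ≤ (k : ℝ) := by
      have := hkC; rw [hC] at this; linarith
    calc 2 * S = ε * ((2 * S) / ε) := by field_simp
    _ ≤ ε * k := by exact mul_le_mul_of_nonneg_left h2 hε.le
  have t3 : 4 * S ^ 2 + p ≤ 2 * c * k := by
    have h3 : (4 * S ^ 2 + p) / (2 * c) ≤ (k : ℝ) := by
      have := hkC; rw [hC] at this; linarith
    calc 4 * S ^ 2 + (p : ℝ) = (2 * c) * ((4 * S ^ 2 + p) / (2 * c)) := by field_simp
    _ ≤ (2 * c) * k := by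
        exact mul_le_mul_of_nonneg_left h3 (by positivity)
    _ = 2 * c * k := by ring
  have t1 : ∀ i, 3 ≤ α i * k / n i := by
    intro i
    have hterm : 3 * (n i : ℝ) / α i ≤ (k : ℝ) := by
      have hone : 3 * (n i : ℝ) / α i ≤ ∑ j, 3 * (n j : ℝ) / α j :=
        Finset.single_le_sum (f := fun j => 3 * (n j : ℝ) / α j)
          (fun j _ => div_nonneg (by nlinarith [hnR j]) (hα j).le) (Finset.mem_univ i)
      have := hkC; rw [hC] at this; linarith
    rw [le_div_iff₀ (hnR i)]
    rw [div_le_iff₀ (hα i)] at hterm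
    nlinarith [hα i, hnR i]
  -- multiplicities
  set m : Fin p → ℕ := fun i => ⌊α i * k / n i⌋₊ - 1 with hmdef
  have hfl3 : ∀ i, 3 ≤ ⌊α i * k / n i⌋₊ := fun i =>
    Nat.le_floor (by exact_mod_cast t1 i)
  have hm_pos : ∀ i, 0 < m i := fun i => by
    have := hfl3 i; simp only [hmdef]; omega
  have hm_cast : ∀ i, (m i : ℝ) = (⌊α i * k / n i⌋₊ : ℝ) - 1 := fun i => by
    have := hfl3 i
    simp only [hmdef]
    rw [Nat.cast_sub (by omega)]
    norm_num
  have hm_le : ∀ i, (m i : ℝ) ≤ α i * k / n i - 1 := fun i => by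
    rw [hm_cast i]
    have := Nat.floor_le (show (0:ℝ) ≤ α i * k / n i from
      div_nonneg (mul_nonneg (hα i).le hk0.le) (hnR i).le)
    linarith
  have hm_ge : ∀ i, α i * k / n i - 2 ≤ (m i : ℝ) := fun i => by
    rw [hm_cast i]
    have := Nat.lt_floor_add_one (α i * k / n i)
    linarith
  have P1 : ∀ i, (m i : ℝ) * n i ≤ α i * k - n i := fun i => by
    have h := hm_le i
    have hne : (n i : ℝ) ≠ 0 := (hnR i).ne'
    have h2 : (α i * k / n i) * n i = α i * k := by field_simp
    nlinarith [hnR i]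
  have P2 : ∀ i, α i * k - 2 * n i ≤ (m i : ℝ) * n i := fun i => by
    have h := hm_ge i
    have hne : (n i : ℝ) ≠ 0 := (hnR i).ne'
    have h2 : (α i * k / n i) * n i = α i * k := by field_simp
    nlinarith [hnR i]
  have hsumle : (∑ i, n i * m i) ≤ k := by
    have hreal : (∑ i, (n i : ℝ) * m i) ≤ (k : ℝ) - S := by
      have : ∀ i ∈ Finset.univ, (n i : ℝ) * m i ≤ α i * k - n i := fun i _ => by
        have := P1 i; linarith
      calc (∑ i, (n i : ℝ) * m i) ≤ ∑ i, (α i * k - n i) := Finset.sum_le_sum this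
      _ = (∑ i, α i) * k - S := by rw [hS, Finset.sum_sub_distrib, Finset.sum_mul]
      _ = (k : ℝ) - S := by rw [hsum, one_mul]
    have : (↑(∑ i, n i * m i) : ℝ) ≤ (k : ℝ) := by push_cast; linarith
    exact_mod_cast this
  set r : ℕ := k - ∑ i, n i * m i with hrdef
  have hkr : (∑ i, n i * m i) + r = k := by omega
  obtain ⟨σ, hinj, htr, hrank⟩ := master p n m hn hm_pos r k hkr
  have hr_cast : (r : ℝ) = (k : ℝ) - ∑ i, (n i : ℝ) * m i := by
    rw [hrdef]
    push_cast [Nat.cast_sub hsumle]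
    ring
  refine ⟨σ, hinj, ?_, ?_⟩
  · -- trace estimate
    intro x
    set T : ℝ := ⨆ i, ‖x i‖ with hT
    have hTle : ∀ i, ‖x i‖ ≤ T := fun i =>
      le_ciSup (f := fun j => ‖x j‖) (Set.Finite.bddAbove (Set.finite_range _)) i
    have hT0 : 0 ≤ T := le_trans (norm_nonneg (x ⟨0, hp⟩)) (hTle ⟨0, hp⟩)
    rw [htr x]
    have hrw : (∑ i, (m i : ℂ) * Matrix.trace (x i)) / (k : ℂ)
        - ∑ i, (α i : ℂ) * Matrix.trace (x i) / (n i : ℂ)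
        = ∑ i, ((m i : ℂ) / (k : ℂ) - (α i : ℂ) / (n i : ℂ)) * Matrix.trace (x i) := by
      rw [Finset.sum_div, ← Finset.sum_sub_distrib]
      exact Finset.sum_congr rfl fun i _ => by ring
    rw [hrw]
    have hterm : ∀ i ∈ Finset.univ,
        ‖((m i : ℂ) / (k : ℂ) - (α i : ℂ) / (n i : ℂ)) * Matrix.trace (x i)‖
          ≤ (2 / k) * ((n i : ℝ) * T) := by
      intro i _
      rw [norm_mul]
      have hΔ : ((m i : ℂ) / (k : ℂ) - (α i : ℂ) / (n i : ℂ))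
          = ((((m i : ℝ) / k - α i / (n i : ℝ)) : ℝ) : ℂ) := by push_cast; ring
      rw [hΔ, Complex.norm_real, Real.norm_eq_abs]
      have e1 : (m i : ℝ) / k - α i / n i ≤ 0 := by
        rw [sub_nonpos, div_le_div_iff₀ hk0 (hnR i)]
        nlinarith [P1 i, hnR i]
      have e2 : α i / n i - (m i : ℝ) / k ≤ 2 / k := by
        rw [sub_le_iff_le_add, ← add_div, div_le_div_iff₀ (hnR i) hk0]
        nlinarith [P2 i]
      have habs : |(m i : ℝ) / k - α i / n i| ≤ 2 / k := by
        rw [abs_le]; constructor <;> linarith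
      have htrb : ‖Matrix.trace (x i)‖ ≤ (n i : ℝ) * T :=
        (trace_le_l2norm _).trans (mul_le_mul_of_nonneg_left (hTle i) (hnR i).le)
      exact mul_le_mul habs htrb (norm_nonneg _) (by positivity)
    calc ‖∑ i, ((m i : ℂ) / (k : ℂ) - (α i : ℂ) / (n i : ℂ)) * Matrix.trace (x i)‖
        ≤ ∑ i, ‖((m i : ℂ) / (k : ℂ) - (α i : ℂ) / (n i : ℂ)) * Matrix.trace (x i)‖ :=
          norm_sum_le _ _
      _ ≤ ∑ i, (2 / k) * ((n i : ℝ) * T) := Finset.sum_le_sum hterm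
      _ = 2 * (S * T) / k := by
          rw [← Finset.mul_sum, ← Finset.sum_mul, ← hS]
          ring
      _ ≤ ε * T := by
          rw [div_le_iff₀ hk0]
          nlinarith [mul_le_mul_of_nonneg_right t2 hT0]
  · -- rank estimate
    have hcast : ((∑ i, (m i) ^ 2 + r ^ 2 : ℕ) : ℝ) = (∑ i, ((m i : ℝ)) ^ 2) + (r : ℝ) ^ 2 := by
      push_cast; ring
    refine le_trans (by exact_mod_cast Nat.cast_le.mpr hrank) (hcast.le.trans ?_)
    have hr2 : (r : ℝ) ≤ 2 * S := by
      rw [hr_cast]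
      have h1 : (∑ i, (α i * k - 2 * n i)) ≤ ∑ i, (n i : ℝ) * m i :=
        Finset.sum_le_sum fun i _ => by nlinarith [P2 i]
      have h2 : (∑ i, (α i * (k : ℝ) - 2 * n i)) = (k : ℝ) - 2 * S := by
        rw [Finset.sum_sub_distrib, ← Finset.sum_mul, hsum, one_mul, hS, ← Finset.mul_sum]
      linarith
    have hr0 : (0 : ℝ) ≤ r := Nat.cast_nonneg r
    have hterm : ∀ i, (m i : ℝ) ^ 2
        ≤ (k : ℝ) ^ 2 * (α i ^ 2 / (n i : ℝ) ^ 2) - 2 * k * (α i / (n i : ℝ)) + 1 := by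
      intro i
      have h1 := hm_le i
      have h0 : (0 : ℝ) ≤ m i := Nat.cast_nonneg _
      have hne : (n i : ℝ) ≠ 0 := (hnR i).ne'
      have hA : α i * k / n i = k * (α i / n i) := by ring
      have hA2 : (α i * k / n i) ^ 2 = (k : ℝ) ^ 2 * (α i ^ 2 / (n i : ℝ) ^ 2) := by
        field_simp
      have hsq := mul_self_le_mul_self h0 h1
      nlinarith [hsq]
    have hsum2 : (∑ i, (m i : ℝ) ^ 2)
        ≤ (k : ℝ) ^ 2 * (∑ i, α i ^ 2 / (n i : ℝ) ^ 2) - 2 * k * c + p := by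
      calc (∑ i, (m i : ℝ) ^ 2)
          ≤ ∑ i, ((k : ℝ) ^ 2 * (α i ^ 2 / (n i : ℝ) ^ 2) - 2 * k * (α i / (n i : ℝ)) + 1) :=
            Finset.sum_le_sum fun i _ => hterm i
        _ = (k : ℝ) ^ 2 * (∑ i, α i ^ 2 / (n i : ℝ) ^ 2) - 2 * k * c + p := by
            rw [Finset.sum_add_distrib, Finset.sum_sub_distrib, ← Finset.mul_sum,
              ← Finset.mul_sum, ← hc]
            simp [Finset.card_univ]
    nlinarith [t3, mul_self_le_mul_self hr0 hr2, hsum2]
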